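/- arXiv:2010.07799 — 4 statements merged into one kernel-verified Lean document; each statement's English description precedes it below -/
import Mathlib

section
/- For any nonnegative real numbers a_1, ..., a_T, we have sqrt(sum_{t=1}^T a_t) ≤ sum_{t=1}^T a_t / sqrt(sum_{s=1}^t a_s) ≤ 2 * sqrt(sum_{t=1}^T a_t), where terms with zero denominator are interpreted as zero. -/
lemma aux_key (T : ℕ) (a : ℕ → ℝ) (ha : ∀ t, 0 ≤ a t) :
    Real.sqrt (∑ t ∈ Finset.range T, a t) ≤
      (∑ t ∈ Finset.range T, a t / Real.sqrt (∑ s ∈ Finset.range (t + 1), a s)) ∧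
    (∑ t ∈ Finset.range T, a t / Real.sqrt (∑ s ∈ Finset.range (t + 1), a s)) ≤
      2 * Real.sqrt (∑ t ∈ Finset.range T, a t) := by
  induction T with
  | zero => simp
  | succ n ih =>
    obtain ⟨ih1, ih2⟩ := ih
    rw [Finset.sum_range_succ (f := fun t => a t / _),
      Finset.sum_range_succ (f := a)]
    set S : ℝ := ∑ t ∈ Finset.range n, a t with hS
    have hS0 : 0 ≤ S := Finset.sum_nonneg fun i _ => ha i
    have hS'0 : 0 ≤ S + a n := by linarith [ha n]
    set u := Real.sqrt (S + a n) with hu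
    set v := Real.sqrt S with hv
    have hv0 : 0 ≤ v := Real.sqrt_nonneg _
    have hu0 : 0 ≤ u := Real.sqrt_nonneg _
    have hvu : v ≤ u := Real.sqrt_le_sqrt (by linarith [ha n])
    have hu2 : u ^ 2 = S + a n := Real.sq_sqrt hS'0
    have hv2 : v ^ 2 = S := Real.sq_sqrt hS0
    rcases eq_or_lt_of_le hu0 with h0 | hpos
    · -- u = 0, so S + a n = 0, everything is 0
      have hu0' : u = 0 := h0.symm
      have hSa : S + a n = 0 := by rw [← hu2, hu0', pow_two, mul_zero]
      have han : a n = 0 := by linarith [ha n]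
      have hSz : S = 0 := by linarith
      have hvz : v = 0 := by rw [hv, hSz, Real.sqrt_zero]
      rw [← hu, hu0', ← hv] at *
      rw [han]
      constructor <;> simp <;> linarith
    · have key1 : u - v ≤ a n / u := by
        rw [le_div_iff₀ hpos]
        nlinarith
      have key2 : a n / u ≤ 2 * (u - v) := by
        rw [div_le_iff₀ hpos]
        nlinarith
      constructor <;> nlinarith

/-- For any nonnegative reals `a 0, …, a (T-1)` (representing `a_1, …, a_T`),
`sqrt (∑ a_t) ≤ ∑_t a_t / sqrt (∑_{s ≤ t} a_s) ≤ 2 * sqrt (∑ a_t)`,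
where terms with zero denominator are interpreted as zero (Lean's division by
zero convention). -/
theorem stmt_0 (T : ℕ) (hT : 0 < T) (a : ℕ → ℝ) (ha : ∀ t, 0 ≤ a t) :
    Real.sqrt (∑ t ∈ Finset.range T, a t) ≤
      (∑ t ∈ Finset.range T, a t / Real.sqrt (∑ s ∈ Finset.range (t + 1), a s)) ∧
    (∑ t ∈ Finset.range T, a t / Real.sqrt (∑ s ∈ Finset.range (t + 1), a s)) ≤
      2 * Real.sqrt (∑ t ∈ Finset.range T, a t) := by
  exact aux_key T a ha
end

section
/- Let a_1, ..., a_T be nonnegative scalars each at most a, and let a_0 ≥ 0. Then sqrt(a_0 + sum_{t=1}^{T-1} a_t) - sqrt(a_0) ≤ sum_{t=1}^T a_t / sqrt(a_0 + sum_{s=1}^{t-1} a_s) ≤ 2a/sqrt(a_0) + 3*sqrt(a) + 3*sqrt(a_0 + sum_{t=1}^{T-1} a_t). -/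
/-- Off-by-one AdaGrad-type inequality (Lemma from Bach–Levy).  `a 0, …, a (T-1)`
represent `a_1, …, a_T ∈ [0, A]`, and `a0 > 0`. -/
theorem stmt_1 (T : ℕ) (hT : 0 < T) (A a0 : ℝ) (hA : 0 < A) (ha0 : 0 < a0)
    (a : ℕ → ℝ) (ha : ∀ t, 0 ≤ a t ∧ a t ≤ A) :
    Real.sqrt (a0 + ∑ t ∈ Finset.range (T - 1), a t) - Real.sqrt a0 ≤
      (∑ t ∈ Finset.range T, a t / Real.sqrt (a0 + ∑ s ∈ Finset.range t, a s)) ∧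
    (∑ t ∈ Finset.range T, a t / Real.sqrt (a0 + ∑ s ∈ Finset.range t, a s)) ≤
      2 * A / Real.sqrt a0 + 3 * Real.sqrt A +
        3 * Real.sqrt (a0 + ∑ t ∈ Finset.range (T - 1), a t) := by
  obtain ⟨n, rfl⟩ : ∃ n, T = n + 1 := ⟨T - 1, (Nat.succ_pred_eq_of_pos hT).symm⟩
  simp only [Nat.add_sub_cancel]
  set S : ℕ → ℝ := fun t => a0 + ∑ s ∈ Finset.range t, a s with hSdef
  have hrw : ∀ t : ℕ, a0 + ∑ s ∈ Finset.range t, a s = S t := fun t => rfl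
  simp only [hrw]
  have hS0 : S 0 = a0 := by simp [hSdef]
  have hSsucc : ∀ t, S (t + 1) = S t + a t := by
    intro t; simp [hSdef, Finset.sum_range_succ, add_assoc]
  have hSge : ∀ t, a0 ≤ S t := by
    intro t
    have : 0 ≤ ∑ s ∈ Finset.range t, a s := Finset.sum_nonneg fun s _ => (ha s).1
    simp only [hSdef]; linarith
  have hSpos : ∀ t, 0 < S t := fun t => lt_of_lt_of_le ha0 (hSge t)
  have hsqpos : ∀ t, 0 < Real.sqrt (S t) := fun t => Real.sqrt_pos.2 (hSpos t)
  have hsq : ∀ t, Real.sqrt (S t) ^ 2 = S t := fun t => Real.sq_sqrt (hSpos t).le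
  have hmono : ∀ t, Real.sqrt (S t) ≤ Real.sqrt (S (t + 1)) := by
    intro t; apply Real.sqrt_le_sqrt; rw [hSsucc]; linarith [(ha t).1]
  have hsqa0 : 0 < Real.sqrt a0 := Real.sqrt_pos.2 ha0
  have hsqle : ∀ t, Real.sqrt a0 ≤ Real.sqrt (S t) :=
    fun t => Real.sqrt_le_sqrt (hSge t)
  -- key 1 : telescoping increment lower bound
  have key : ∀ t, Real.sqrt (S (t + 1)) - Real.sqrt (S t) ≤ a t / Real.sqrt (S t) := by
    intro t
    rw [le_div_iff₀ (hsqpos t)]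
    nlinarith [hsq t, hsq (t + 1), hmono t, hsqpos t, hSsucc t,
      mul_nonneg (sub_nonneg.2 (hmono t)) (hsqpos (t + 1)).le]
  -- key 2 : when S t > A, the term is bounded by 3 times the sqrt increment
  have key2 : ∀ t, A < S t →
      a t / Real.sqrt (S t) ≤ 3 * (Real.sqrt (S (t + 1)) - Real.sqrt (S t)) := by
    intro t hAS
    have hv2u : Real.sqrt (S (t + 1)) ≤ 2 * Real.sqrt (S t) := by
      nlinarith [hsq t, hsq (t + 1), hSsucc t, (ha t).2, hsqpos t, hsqpos (t + 1),
        sq_nonneg (Real.sqrt (S (t + 1)) - 2 * Real.sqrt (S t))]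
    rw [div_le_iff₀ (hsqpos t)]
    nlinarith [hsq t, hsq (t + 1), hSsucc t,
      mul_nonneg (sub_nonneg.2 (hmono t)) (sub_nonneg.2 hv2u)]
  -- the prefix-sum invariant
  have hB : ∀ m, (∑ t ∈ Finset.range m, (if S t ≤ A then a t else 0)) ≤ 2 * A ∧
      (S m ≤ A → (∑ t ∈ Finset.range m, (if S t ≤ A then a t else 0)) + a0 ≤ S m) := by
    intro m
    induction m with
    | zero =>
      constructor
      · simp; linarith
      · intro _; simp [hS0]
    | succ m ih =>
      rw [Finset.sum_range_succ]
      by_cases hc : S m ≤ A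
      · rw [if_pos hc]
        have h1 := ih.2 hc
        constructor
        · linarith [(ha m).2]
        · intro _; rw [hSsucc]; linarith
      · rw [if_neg hc]
        push_neg at hc
        refine ⟨by linarith [ih.1], fun h => absurd h (not_le.2 ?_)⟩
        calc A < S m := hc
          _ ≤ S (m + 1) := by rw [hSsucc]; linarith [(ha m).1]
  constructor
  · -- lower bound
    have htel : ∑ t ∈ Finset.range n, (Real.sqrt (S (t + 1)) - Real.sqrt (S t)) =
        Real.sqrt (S n) - Real.sqrt (S 0) :=
      Finset.sum_range_sub (fun t => Real.sqrt (S t)) n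
    rw [Finset.sum_range_succ]
    have h1 : ∑ t ∈ Finset.range n, (Real.sqrt (S (t + 1)) - Real.sqrt (S t)) ≤
        ∑ t ∈ Finset.range n, a t / Real.sqrt (S t) :=
      Finset.sum_le_sum fun t _ => key t
    have h2 : 0 ≤ a n / Real.sqrt (S n) := div_nonneg (ha n).1 (hsqpos n).le
    rw [hS0] at htel
    linarith
  · -- upper bound
    rw [Finset.sum_range_succ]
    have hmain : ∑ t ∈ Finset.range n, a t / Real.sqrt (S t) ≤
        (∑ t ∈ Finset.range n, (if S t ≤ A then a t else 0)) / Real.sqrt a0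
          + 3 * (Real.sqrt (S n) - Real.sqrt a0) := by
      have hterm : ∀ t ∈ Finset.range n, a t / Real.sqrt (S t) ≤
          (if S t ≤ A then a t else 0) / Real.sqrt a0
            + 3 * (Real.sqrt (S (t + 1)) - Real.sqrt (S t)) := by
        intro t _
        by_cases hc : S t ≤ A
        · rw [if_pos hc]
          have h1 : a t / Real.sqrt (S t) ≤ a t / Real.sqrt a0 :=
            div_le_div_of_nonneg_left (ha t).1 hsqa0 (hsqle t)
          linarith [hmono t]
        · rw [if_neg hc]
          have h1 := key2 t (not_le.1 hc)
          have h2 : (0 : ℝ) / Real.sqrt a0 = 0 := zero_div _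
          linarith
      have := Finset.sum_le_sum hterm
      rwa [Finset.sum_add_distrib, ← Finset.sum_div, ← Finset.mul_sum,
        Finset.sum_range_sub (fun t => Real.sqrt (S t)), hS0] at this
    have hlast : a n / Real.sqrt (S n) ≤
        (if S n ≤ A then a n else 0) / Real.sqrt a0 + Real.sqrt A := by
      by_cases hc : S n ≤ A
      · rw [if_pos hc]
        have h1 : a n / Real.sqrt (S n) ≤ a n / Real.sqrt a0 :=
          div_le_div_of_nonneg_left (ha n).1 hsqa0 (hsqle n)
        linarith [Real.sqrt_nonneg A]
      · rw [if_neg hc]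
        push_neg at hc
        have h1 : a n / Real.sqrt (S n) ≤ A / Real.sqrt A :=
          div_le_div₀ hA.le (ha n).2 (Real.sqrt_pos.2 hA) (Real.sqrt_le_sqrt hc.le)
        rw [Real.div_sqrt] at h1
        simp only [zero_div, zero_add]
        exact h1
    have hBtot : (∑ t ∈ Finset.range n, (if S t ≤ A then a t else 0))
        + (if S n ≤ A then a n else 0) ≤ 2 * A := by
      have := (hB (n + 1)).1
      rwa [Finset.sum_range_succ] at this
    have hdiv : ((∑ t ∈ Finset.range n, (if S t ≤ A then a t else 0))
          + (if S n ≤ A then a n else 0)) / Real.sqrt a0 ≤ 2 * A / Real.sqrt a0 :=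
      div_le_div_of_nonneg_right hBtot hsqa0.le
    rw [add_div] at hdiv
    have hAnn : 0 ≤ Real.sqrt A := Real.sqrt_nonneg A
    linarith [hsqa0.le]
end

section
/- Let d_1², ..., d_T² and R² > 0 be nonnegative scalars with d_t² ≤ R² for all t, let D_0 > 0, and define D_t² = D_{t−1}²(1 + d_t²/R²). Then for any 1 ≤ a ≤ b ≤ T: (i) sum_{t=a}^b D_{t−1}·d_t² ≥ 2R²(D_b − D_{a−1}); (ii) sum_{t=a}^b D_{t−1}·d_t² ≤ (√2 + 1)·R²·(D_b − D_{a−1}); (iii) sum_{t=a}^b d_t² ≤ 4R²·ln(D_b/D_{a−1}). -/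
/-- Telescoping sum bound. -/
lemma tele_le (G F : ℕ → ℝ) (a b : ℕ) (hab : a ≤ b)
    (h : ∀ t, a ≤ t → t ≤ b → F t ≤ G t - G (t - 1)) :
    ∑ t ∈ Finset.Icc a b, F t ≤ G b - G (a - 1) := by
  induction b, hab using Nat.le_induction with
  | base =>
    rw [Finset.Icc_self, Finset.sum_singleton]
    exact h a le_rfl le_rfl
  | succ b hab ih =>
    rw [Finset.sum_Icc_succ_top (by omega : a ≤ b + 1)]
    have h1 := h (b + 1) (by omega) le_rfl
    have h2 := ih (fun t hta htb => h t hta (by omega))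
    simp only [Nat.add_sub_cancel] at h1
    linarith

lemma tele_ge (G F : ℕ → ℝ) (a b : ℕ) (hab : a ≤ b)
    (h : ∀ t, a ≤ t → t ≤ b → G t - G (t - 1) ≤ F t) :
    G b - G (a - 1) ≤ ∑ t ∈ Finset.Icc a b, F t := by
  have := tele_le (fun t => -G t) (fun t => -F t) a b hab
    (fun t hta htb => by simpa using neg_le_neg (h t hta htb))
  simp only [Finset.sum_neg_distrib] at this
  linarith

/-- Multiplicative step-size recurrence bounds (Lemma from Ene–Nguyen–Vladu).
`ds t` plays the role of `d_t²` and `Rsq` the role of `R²`; `D` satisfies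
`D t = D (t−1) · √(1 + ds t / Rsq)` with `D 0 > 0`. -/
theorem stmt_14 (T : ℕ) (Rsq : ℝ) (hRsq : 0 < Rsq)
    (ds : ℕ → ℝ) (hds : ∀ t, 0 ≤ ds t ∧ ds t ≤ Rsq)
    (D : ℕ → ℝ) (hD0 : 0 < D 0)
    (hDrec : ∀ t, D (t + 1) = D t * Real.sqrt (1 + ds (t + 1) / Rsq))
    (a b : ℕ) (ha : 1 ≤ a) (hab : a ≤ b) (hbT : b ≤ T) :
    (∑ t ∈ Finset.Icc a b, D (t - 1) * ds t ≥ 2 * Rsq * (D b - D (a - 1))) ∧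
    (∑ t ∈ Finset.Icc a b, D (t - 1) * ds t ≤
      (Real.sqrt 2 + 1) * Rsq * (D b - D (a - 1))) ∧
    (∑ t ∈ Finset.Icc a b, ds t ≤ 4 * Rsq * Real.log (D b / D (a - 1))) := by
  have Dpos : ∀ t, 0 < D t := by
    intro t
    induction t with
    | zero => exact hD0
    | succ s ih =>
      rw [hDrec s]
      have h1 : (0:ℝ) < 1 + ds (s + 1) / Rsq := by
        have := (hds (s + 1)).1
        positivity
      exact mul_pos ih (Real.sqrt_pos.mpr h1)
  -- per-step facts
  have key : ∀ s : ℕ,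
      2 * Rsq * (D (s+1) - D s) ≤ D s * ds (s+1) ∧
      D s * ds (s+1) ≤ (Real.sqrt 2 + 1) * Rsq * (D (s+1) - D s) ∧
      ds (s+1) ≤ 4 * Rsq * (Real.log (D (s+1)) - Real.log (D s)) := by
    intro s
    set x := ds (s+1) / Rsq with hxdef
    have hx0 : 0 ≤ x := div_nonneg (hds (s+1)).1 hRsq.le
    have hx1 : x ≤ 1 := (div_le_one hRsq).mpr (hds (s+1)).2
    have hds_eq : ds (s+1) = Rsq * x := by
      rw [hxdef]; field_simp
    set u := Real.sqrt (1 + x) with hudef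
    have hu2 : u ^ 2 = 1 + x := Real.sq_sqrt (by linarith)
    have hu1 : 1 ≤ u := by
      nlinarith [Real.sqrt_nonneg (1 + x), hu2]
    have hule : u ≤ Real.sqrt 2 := Real.sqrt_le_sqrt (by linarith)
    have hDs := Dpos s
    have hDrec' : D (s+1) = D s * u := hDrec s
    refine ⟨?_, ?_, ?_⟩
    · rw [hDrec', hds_eq]
      nlinarith [sq_nonneg (u - 1), hDs.le, hRsq.le, mul_pos hRsq hDs]
    · rw [hDrec', hds_eq]
      have h2 : (1:ℝ) ≤ Real.sqrt 2 := by
        rw [show (1:ℝ) = Real.sqrt 1 by simp]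
        exact Real.sqrt_le_sqrt (by norm_num)
      nlinarith [mul_pos hRsq hDs, mul_nonneg (mul_pos hRsq hDs).le (sub_nonneg.mpr hule),
        mul_nonneg (mul_pos hRsq hDs).le (sub_nonneg.mpr hu1)]
    · -- x ≤ 2 log (1+x)
      have hlog : x / 2 ≤ Real.log (1 + x) := by
        rw [Real.le_log_iff_exp_le (by linarith)]
        have h1 : 1 - x/2 ≤ Real.exp (-(x/2)) := by
          have := Real.add_one_le_exp (-(x/2)); linarith
        have hpos : (0:ℝ) < 1 - x/2 + x/2 := by linarith
        have hhalf : (0:ℝ) < 1 - x/2 := by linarith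
        have h2 : Real.exp (x/2) * (1 - x/2) ≤ 1 := by
          calc Real.exp (x/2) * (1 - x/2) ≤ Real.exp (x/2) * Real.exp (-(x/2)) :=
                mul_le_mul_of_nonneg_left h1 (Real.exp_pos _).le
            _ = 1 := by rw [← Real.exp_add]; simp
        have h3 : (1:ℝ) ≤ (1 + x) * (1 - x/2) := by nlinarith
        nlinarith [Real.exp_pos (x/2)]
      have hlogD : Real.log (D (s+1)) - Real.log (D s) = Real.log (1 + x) / 2 := by
        rw [hDrec', Real.log_mul hDs.ne' (by positivity), hudef,
          Real.log_sqrt (by linarith)]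
        ring
      rw [hlogD, hds_eq]
      nlinarith [mul_le_mul_of_nonneg_left hlog hRsq.le]
  -- generic step form for t ≥ 1
  have step : ∀ t, 1 ≤ t →
      2 * Rsq * (D t - D (t-1)) ≤ D (t-1) * ds t ∧
      D (t-1) * ds t ≤ (Real.sqrt 2 + 1) * Rsq * (D t - D (t-1)) ∧
      ds t ≤ 4 * Rsq * (Real.log (D t) - Real.log (D (t-1))) := by
    intro t ht
    obtain ⟨s, rfl⟩ := Nat.exists_eq_add_of_le ht
    simpa [Nat.add_comm] using key s
  have hta : ∀ t, a ≤ t → 1 ≤ t := fun t h => le_trans ha h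
  refine ⟨?_, ?_, ?_⟩
  · -- (i)
    have := tele_ge (fun t => 2 * Rsq * D t) (fun t => D (t-1) * ds t) a b hab
      (fun t h1 h2 => by
        have := (step t (hta t h1)).1
        linarith)
    simpa [mul_sub] using this
  · have := tele_le (fun t => (Real.sqrt 2 + 1) * Rsq * D t) (fun t => D (t-1) * ds t) a b hab
      (fun t h1 h2 => by
        have := (step t (hta t h1)).2.1
        linarith)
    simpa [mul_sub] using this
  · have := tele_le (fun t => 4 * Rsq * Real.log (D t)) ds a b hab
      (fun t h1 h2 => by
        have := (step t (hta t h1)).2.2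
        linarith)
    have hlogdiv : Real.log (D b / D (a-1)) = Real.log (D b) - Real.log (D (a-1)) :=
      Real.log_div (Dpos b).ne' (Dpos (a-1)).ne'
    rw [hlogdiv]
    linarith
end

section
/- Let a ≥ 0 and define φ : {z ∈ R^d : z_i ≥ 1 for all i} → R by φ(z) = a·sqrt(sum_{i=1}^d ln(z_i)) − sum_{i=1}^d z_i. Then max over the domain of φ is at most sqrt(d)·a·sqrt(ln a) (when a ≥ 1, so this bound is nonnegative). -/
lemma key (d a t : ℝ) (hd : 1 ≤ d) (ha : 1 ≤ a) (ht : 0 ≤ t) :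
    Real.sqrt d * a * Real.sqrt t - d * Real.exp t ≤ Real.sqrt d * a * Real.sqrt (Real.log a) := by
  have hL : 0 ≤ Real.log a := Real.log_nonneg ha
  have ha0 : (0:ℝ) < a := by linarith
  have hsd1 : 1 ≤ Real.sqrt d := by
    rw [show (1:ℝ) = Real.sqrt 1 by simp]; exact Real.sqrt_le_sqrt hd
  have hsd0 : 0 ≤ Real.sqrt d := Real.sqrt_nonneg d
  rcases le_or_gt t (Real.log a) with h | h
  · have h1 : Real.sqrt t ≤ Real.sqrt (Real.log a) := Real.sqrt_le_sqrt h
    have h2 : 0 < Real.exp t := Real.exp_pos t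
    nlinarith [Real.sqrt_nonneg t, mul_le_mul_of_nonneg_left h1 (by positivity : (0:ℝ) ≤ Real.sqrt d * a)]
  · -- t > log a
    set L := Real.log a with hLdef
    set s := t - L with hs
    have hs0 : 0 < s := by simp [hs]; linarith
    have ht0 : 0 < t := lt_of_le_of_lt hL h
    have hst : Real.sqrt s ≤ Real.sqrt t := Real.sqrt_le_sqrt (by linarith)
    have hqt : Real.sqrt t ^ 2 = t := Real.sq_sqrt ht0.le
    have hqL : Real.sqrt L ^ 2 = L := Real.sq_sqrt hL
    have hqs : Real.sqrt s ^ 2 = s := Real.sq_sqrt hs0.le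
    have hes : 1 + s ≤ Real.exp s := by linarith [Real.add_one_le_exp s]
    have het : Real.exp t = a * Real.exp s := by
      rw [hs]; rw [show t = L + (t - L) by ring] at *
      rw [Real.exp_add, hLdef, Real.exp_log ha0]; ring_nf
    have hLt : Real.sqrt L ≤ Real.sqrt t := Real.sqrt_le_sqrt h.le
    -- step A: (√t - √L) * √t ≤ s
    have hA : (Real.sqrt t - Real.sqrt L) * Real.sqrt t ≤ s := by
      nlinarith [Real.sqrt_nonneg L, Real.sqrt_nonneg t, mul_le_mul_of_nonneg_left hLt (Real.sqrt_nonneg L)]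
    -- step B: s ≤ √s * (1 + s)
    have hB : s ≤ Real.sqrt s * (1 + s) := by
      nlinarith [Real.sqrt_nonneg s, sq_nonneg (Real.sqrt s - 1)]
    -- step C: √d * a * s ≤ d * exp t * √t
    have hC : Real.sqrt d * a * s ≤ d * Real.exp t * Real.sqrt t := by
      have hd2 : Real.sqrt d * Real.sqrt d = d := Real.mul_self_sqrt (by linarith)
      have : s ≤ Real.sqrt t * Real.exp s := by
        calc s ≤ Real.sqrt s * (1 + s) := hB
        _ ≤ Real.sqrt t * Real.exp s := by
            apply mul_le_mul hst hes (by linarith) (Real.sqrt_nonneg t)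
      calc Real.sqrt d * a * s ≤ Real.sqrt d * a * (Real.sqrt t * Real.exp s) := by
            apply mul_le_mul_of_nonneg_left this (by positivity)
      _ ≤ d * Real.exp t * Real.sqrt t := by
          rw [het]
          have hdd : Real.sqrt d ≤ d := by nlinarith
          nlinarith [mul_le_mul_of_nonneg_right hdd
            (by positivity : (0:ℝ) ≤ a * Real.exp s * Real.sqrt t)]
    -- combine: √d a (√t - √L) √t ≤ √d a s ≤ d e^t √t, divide by √t
    have hmain : Real.sqrt d * a * (Real.sqrt t - Real.sqrt L) ≤ d * Real.exp t := by
      have hqt0 : 0 < Real.sqrt t := Real.sqrt_pos.mpr ht0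
      have h1 : Real.sqrt d * a * (Real.sqrt t - Real.sqrt L) * Real.sqrt t ≤ d * Real.exp t * Real.sqrt t := by
        calc Real.sqrt d * a * (Real.sqrt t - Real.sqrt L) * Real.sqrt t
            = Real.sqrt d * a * ((Real.sqrt t - Real.sqrt L) * Real.sqrt t) := by ring
          _ ≤ Real.sqrt d * a * s := by
              apply mul_le_mul_of_nonneg_left hA (by positivity)
          _ ≤ d * Real.exp t * Real.sqrt t := hC
      exact le_of_mul_le_mul_right h1 hqt0
    linarith [hmain]

/-- For `a ≥ 1` and `z` with every coordinate at least `1`,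
`a √(∑ ln z_i) − ∑ z_i ≤ √d · a · √(ln a)`. -/
theorem stmt_15 (d : ℕ) (hd : 0 < d) (a : ℝ) (ha : 1 ≤ a) :
    ∀ z : Fin d → ℝ, (∀ i, 1 ≤ z i) →
      a * Real.sqrt (∑ i, Real.log (z i)) - (∑ i, z i) ≤
        Real.sqrt d * a * Real.sqrt (Real.log a) := by
  intro z hz
  have hd0 : (0:ℝ) < d := by exact_mod_cast hd
  have hd1 : (1:ℝ) ≤ d := by exact_mod_cast hd
  set S := ∑ i, Real.log (z i) with hS
  have hS0 : 0 ≤ S := Finset.sum_nonneg fun i _ => Real.log_nonneg (hz i)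
  have ht0 : 0 ≤ S / d := by positivity
  -- Jensen: exp (S/d) ≤ (∑ z i) / d
  have hjensen : Real.exp (S / d) ≤ (∑ i, z i) / d := by
    have h := convexOn_exp.map_sum_le (t := Finset.univ) (w := fun _ : Fin d => 1 / (d:ℝ))
      (p := fun i => Real.log (z i)) (fun i _ => by positivity)
      (by simp [Finset.sum_const, Finset.card_univ]; field_simp)
      (fun i _ => Set.mem_univ _)
    have heq : ∀ i : Fin d, Real.exp (Real.log (z i)) = z i := fun i =>
      Real.exp_log (lt_of_lt_of_le one_pos (hz i))
    simp only [smul_eq_mul] at h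
    calc Real.exp (S / d) = Real.exp (∑ i, 1 / (d:ℝ) * Real.log (z i)) := by
          rw [← Finset.mul_sum]; congr 1; field_simp [hS]; exact hS
      _ ≤ ∑ i, 1 / (d:ℝ) * Real.exp (Real.log (z i)) := h
      _ = (∑ i, z i) / d := by
          rw [← Finset.mul_sum, Finset.sum_congr rfl fun i _ => heq i]; field_simp
  have hsum : (d:ℝ) * Real.exp (S / d) ≤ ∑ i, z i := by
    rw [mul_comm]; exact (le_div_iff₀ hd0).mp hjensen
  have hsqrt : Real.sqrt S = Real.sqrt d * Real.sqrt (S / d) := by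
    rw [← Real.sqrt_mul hd0.le]
    congr 1; field_simp
  have := key d a (S / d) hd1 ha ht0
  calc a * Real.sqrt S - (∑ i, z i) ≤ a * Real.sqrt S - d * Real.exp (S / d) := by linarith
    _ = Real.sqrt d * a * Real.sqrt (S / d) - d * Real.exp (S / d) := by rw [hsqrt]; ring
    _ ≤ Real.sqrt d * a * Real.sqrt (Real.log a) := this
end
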